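/- Let m ∈ (1,2) and assume U satisfies A2(m)(i) and A2(m)(ii). Let T ∈ ℕ* and γ ∈ [0,m−1). Then for all h > 0 there exists R_H ≥ 0 such that for all q₀, p₀ ∈ ℝ^d with ‖q₀‖ ≥ R_H and ‖p₀‖ ≤ ‖q₀‖^γ: H(Φ_h^{∘T}(q₀,p₀)) − H(q₀,p₀) ≤ 0, where H(q,p) = U(q) + ‖p‖²/2. -/

import Mathlib

open Real
noncomputable section

/-- One leapfrog (Störmer–Verlet) step for the potential `U` with step size `h`. -/
def leapfrog {d : ℕ} (U : EuclideanSpace ℝ (Fin d) → ℝ) (h : ℝ)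
    (x : EuclideanSpace ℝ (Fin d) × EuclideanSpace ℝ (Fin d)) :
    EuclideanSpace ℝ (Fin d) × EuclideanSpace ℝ (Fin d) :=
  let p2 := x.2 - (h / 2) • gradient U x.1
  let q' := x.1 + h • p2
  (q', p2 - (h / 2) • gradient U q')

/-- The Hamiltonian `H(q,p) = U(q) + ‖p‖²/2`. -/
def hamiltonian {d : ℕ} (U : EuclideanSpace ℝ (Fin d) → ℝ)
    (x : EuclideanSpace ℝ (Fin d) × EuclideanSpace ℝ (Fin d)) : ℝ :=
  U x.1 + ‖x.2‖ ^ 2 / 2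

open Set Filter
set_option maxHeartbeats 2000000

noncomputable instance hmcNACG2 {E : Type*} [NormedAddCommGroup E] [NormedSpace ℝ E] :
    NormedAddCommGroup (E →L[ℝ] E →L[ℝ] ℝ) := ContinuousLinearMap.toNormedAddCommGroup
noncomputable instance hmcNS2 {E : Type*} [NormedAddCommGroup E] [NormedSpace ℝ E] :
    NormedSpace ℝ (E →L[ℝ] E →L[ℝ] ℝ) := ContinuousLinearMap.toNormedSpace

namespace HMCAux

lemma mul3_le {L x y X Y : ℝ} (hL : 0 ≤ L) (hx0 : 0 ≤ x) (hy0 : 0 ≤ y)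
    (hx : x ≤ X) (hy : y ≤ Y) : L * x * y ≤ L * X * Y := by
  have h1 : L * x ≤ L * X := mul_le_mul_of_nonneg_left hx hL
  calc L * x * y ≤ L * X * y := mul_le_mul_of_nonneg_right h1 hy0
    _ ≤ L * X * Y := mul_le_mul_of_nonneg_left hy (mul_nonneg hL (hx0.trans hx))

lemma taylor1_mvt {E : Type*} [NormedAddCommGroup E] [NormedSpace ℝ E]
    {φ Φ : ℝ → E} {L : E} {C : ℝ}
    (hφ : ∀ t ∈ Icc (0:ℝ) 1, HasDerivAt φ (Φ t) t)
    (hb : ∀ t ∈ Icc (0:ℝ) 1, ‖Φ t - L‖ ≤ C) :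
    ∀ t ∈ Icc (0:ℝ) 1, ‖φ t - φ 0 - t • L‖ ≤ C * t := by
  intro t ht
  have := norm_image_sub_le_of_norm_deriv_le_segment' (a := 0) (b := 1)
    (f := fun s => φ s - s • L) (f' := fun s => Φ s - L) (C := C)
    (fun s hs => (((hφ s hs).sub ((hasDerivAt_id s).smul_const L)).congr_deriv
      (by simp)).hasDerivWithinAt)
    (fun s hs => hb s (Ico_subset_Icc_self hs)) t ht
  have e : φ t - t • L - φ 0 = φ t - φ 0 - t • L := by abel
  simpa [e] using this

lemma one_sided_mvt {φ Φ : ℝ → ℝ} {C : ℝ}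
    (hφ : ∀ t ∈ Icc (0:ℝ) 1, HasDerivAt φ (Φ t) t)
    (hb : ∀ t ∈ Icc (0:ℝ) 1, Φ t ≤ C) : φ 1 - φ 0 ≤ C := by
  have h1 : φ 1 ≤ φ 0 + C * 1 := by
    have := image_le_of_deriv_right_le_deriv_boundary (f := φ) (f' := Φ) (a := 0) (b := 1)
      (B := fun t => φ 0 + C * t) (B' := fun _ => C)
      (fun t ht => (hφ t ht).continuousAt.continuousWithinAt)
      (fun t ht => (hφ t (Ico_subset_Icc_self ht)).hasDerivWithinAt)
      (by simp)
      (by fun_prop)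
      (fun t _ => by
        have := ((hasDerivAt_id t).const_mul C).const_add (φ 0)
        simp only [id_eq, mul_one] at this
        exact this.hasDerivWithinAt)
      (fun t ht => hb t (Ico_subset_Icc_self ht))
    simpa using this (right_mem_Icc.2 zero_le_one)
  linarith

local notation "⟪" x ", " y "⟫" => @inner ℝ _ _ x y

variable {E : Type*} [NormedAddCommGroup E] [InnerProductSpace ℝ E] [CompleteSpace E]

lemma inner_gradient (U : E → ℝ) (x v : E) : ⟪gradient U x, v⟫ = fderiv ℝ U x v :=
  InnerProductSpace.toDual_symm_apply

/-- Core one-step energy estimate for the leapfrog integrator. -/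
lemma step_energy_core (U : E → ℝ)
    (hU1 : ∀ y, HasFDerivAt U (fderiv ℝ U y) y)
    (hU2 : ∀ y, HasFDerivAt (fderiv ℝ U) (fderiv ℝ (fderiv ℝ U) y) y)
    (K : Set E)
    (h κ Tr A₂ ρ L M₃ G W δm : ℝ)
    (hh : 0 < h) (hκ1 : 1/2 ≤ κ) (hκT : κ ≤ Tr)
    (hL0 : 0 ≤ L) (hM0 : 0 ≤ M₃) (hG0 : 0 ≤ G) (hρ0 : 0 ≤ A₂ * ρ) (hW0 : 0 ≤ W)
    (hδ0 : 0 ≤ δm) (hTr : 0 ≤ Tr)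
    (a pa pha b w : E)
    (hpha : pha = pa - (h/2) • gradient U a)
    (hb : b = a + h • pha)
    (hdecomp : pha = w - (h*κ) • gradient U a)
    (hseg : ∀ t ∈ Icc (0:ℝ) 1, a + t • (h • pha) ∈ K)
    (hΔm : h * ‖pha‖ ≤ δm)
    (hW : ‖w‖ ≤ W)
    (hLK : ∀ x ∈ K, ‖fderiv ℝ (fderiv ℝ U) x‖ ≤ L)
    (hlip2 : ∀ x ∈ K, ‖fderiv ℝ (fderiv ℝ U) x - fderiv ℝ (fderiv ℝ U) a‖ ≤ M₃ * ‖x - a‖)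
    (hglip : ∀ x ∈ K, ‖gradient U x - gradient U a‖ ≤ L * ‖x - a‖)
    (hgG : ∀ x ∈ K, ‖gradient U x‖ ≤ G)
    (hhess : ∀ x ∈ K, A₂ * ρ ≤ fderiv ℝ (fderiv ℝ U) x (gradient U x) (gradient U x))
    (hcond : (3/2)*M₃*δm^3 + (h^2/8)*(2*(h^2*Tr*(2*L^2*G*δm) + h*L*G*W) + (L*δm)^2)
        ≤ (h^4*A₂/8)*ρ) :
    U b + ‖pha - (h/2) • gradient U b‖^2/2 ≤ U a + ‖pa‖^2/2 := by
  set Δ : E := h • pha with hΔdef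
  set c : ℝ → E := fun t => a + t • Δ with hcdef
  have hc0 : c 0 = a := by simp [hcdef]
  have hc1 : c 1 = b := by simp [hcdef, hb]
  have hcK : ∀ t ∈ Icc (0:ℝ) 1, c t ∈ K := fun t ht => hseg t ht
  have haK : a ∈ K := by
    have := hcK 0 (left_mem_Icc.2 zero_le_one); rwa [hc0] at this
  have hbK : b ∈ K := by
    have := hcK 1 (right_mem_Icc.2 zero_le_one); rwa [hc1] at this
  have hcd : ∀ t : ℝ, HasDerivAt c Δ t := fun t => by
    simpa [hcdef] using ((hasDerivAt_id t).smul_const Δ).const_add a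
  have hΔnorm : ‖Δ‖ ≤ δm := by
    rw [hΔdef, norm_smul, Real.norm_eq_abs, abs_of_pos hh]; exact hΔm
  have hΔ0 : (0:ℝ) ≤ ‖Δ‖ := norm_nonneg _
  have hdist : ∀ t ∈ Icc (0:ℝ) 1, ‖c t - a‖ ≤ ‖Δ‖ := by
    intro t ht
    have e : c t - a = t • Δ := by simp [hcdef]
    rw [e, norm_smul, Real.norm_eq_abs, abs_of_nonneg ht.1]
    nlinarith [ht.2, norm_nonneg Δ]
  set Φ : ℝ → ℝ := fun t => fderiv ℝ U (c t) Δ with hΦdef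
  set Φ₂ : ℝ → ℝ := fun t => fderiv ℝ (fderiv ℝ U) (c t) Δ Δ with hΦ₂def
  set φ₂ : ℝ → ℝ := fun t => fderiv ℝ U (c t) (gradient U a) with hφ₂def
  set Φ₃ : ℝ → ℝ := fun t => fderiv ℝ (fderiv ℝ U) (c t) Δ (gradient U a) with hΦ₃def
  have hψd : ∀ t : ℝ, HasDerivAt (fun s => U (c s)) (Φ t) t := fun t =>
    (hU1 (c t)).comp_hasDerivAt t (hcd t)
  have hΦd : ∀ t : ℝ, HasDerivAt Φ (Φ₂ t) t := by
    intro t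
    have h1 : HasFDerivAt (fun y => fderiv ℝ U y Δ)
        ((ContinuousLinearMap.apply ℝ ℝ Δ).comp (fderiv ℝ (fderiv ℝ U) (c t))) (c t) :=
      (ContinuousLinearMap.apply ℝ ℝ Δ).hasFDerivAt.comp (c t) (hU2 (c t))
    simpa [hΦdef, hΦ₂def, Function.comp_def] using h1.comp_hasDerivAt t (hcd t)
  have hφ₂d : ∀ t : ℝ, HasDerivAt φ₂ (Φ₃ t) t := by
    intro t
    have h1 : HasFDerivAt (fun y => fderiv ℝ U y (gradient U a))
        ((ContinuousLinearMap.apply ℝ ℝ (gradient U a)).comp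
          (fderiv ℝ (fderiv ℝ U) (c t))) (c t) :=
      (ContinuousLinearMap.apply ℝ ℝ (gradient U a)).hasFDerivAt.comp (c t) (hU2 (c t))
    simpa [hφ₂def, hΦ₃def, Function.comp_def] using h1.comp_hasDerivAt t (hcd t)
  have hΦ₂lip : ∀ t ∈ Icc (0:ℝ) 1, |Φ₂ t - Φ₂ 0| ≤ M₃ * ‖Δ‖^3 := by
    intro t ht
    have e1 : Φ₂ t - Φ₂ 0 = ((fderiv ℝ (fderiv ℝ U) (c t) - fderiv ℝ (fderiv ℝ U) a) Δ) Δ := by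
      simp [hΦ₂def, hc0]
    rw [e1, ← Real.norm_eq_abs]
    calc ‖((fderiv ℝ (fderiv ℝ U) (c t) - fderiv ℝ (fderiv ℝ U) a) Δ) Δ‖
        ≤ ‖(fderiv ℝ (fderiv ℝ U) (c t) - fderiv ℝ (fderiv ℝ U) a) Δ‖ * ‖Δ‖ :=
          ContinuousLinearMap.le_opNorm _ Δ
      _ ≤ (‖fderiv ℝ (fderiv ℝ U) (c t) - fderiv ℝ (fderiv ℝ U) a‖ * ‖Δ‖) * ‖Δ‖ :=
          mul_le_mul_of_nonneg_right (ContinuousLinearMap.le_opNorm _ Δ) (norm_nonneg _)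
      _ ≤ ((M₃ * ‖c t - a‖) * ‖Δ‖) * ‖Δ‖ :=
          mul_le_mul_of_nonneg_right (mul_le_mul_of_nonneg_right
            (hlip2 (c t) (hcK t ht)) (norm_nonneg _)) (norm_nonneg _)
      _ ≤ ((M₃ * ‖Δ‖) * ‖Δ‖) * ‖Δ‖ := by
          have := hdist t ht
          gcongr
      _ = M₃ * ‖Δ‖^3 := by ring
  have htay1 : ∀ t ∈ Icc (0:ℝ) 1, |Φ t - Φ 0 - t * Φ₂ 0| ≤ (M₃ * ‖Δ‖^3) * t := by
    have := taylor1_mvt (φ := Φ) (Φ := Φ₂) (L := Φ₂ 0) (C := M₃ * ‖Δ‖^3)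
      (fun t _ => hΦd t) (fun t ht => by
        rw [Real.norm_eq_abs]; simpa using hΦ₂lip t ht)
    intro t ht
    simpa [smul_eq_mul] using this t ht
  have htay2 : |U b - U a - Φ 0 - Φ₂ 0 / 2| ≤ M₃ * ‖Δ‖^3 := by
    set χ : ℝ → ℝ := fun t => U (c t) - U a - t * Φ 0 - t^2/2 * Φ₂ 0 with hχdef
    have hχd : ∀ t ∈ Icc (0:ℝ) 1,
        HasDerivWithinAt χ (Φ t - Φ 0 - t * Φ₂ 0) (Icc (0:ℝ) 1) t := by
      intro t _
      have hder : HasDerivAt χ (Φ t - Φ 0 - t * Φ₂ 0) t := by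
        have h1 := (hψd t).sub_const (U a)
        have h2' : HasDerivAt (fun s : ℝ => s * Φ 0) (Φ 0) t := by
          simpa using (hasDerivAt_id t).mul_const (Φ 0)
        have h3' : HasDerivAt (fun s : ℝ => s^2/2 * Φ₂ 0) (t * Φ₂ 0) t := by
          have := ((hasDerivAt_pow 2 t).div_const 2).mul_const (Φ₂ 0)
          refine this.congr_deriv ?_
          push_cast
          ring
        have h3 := (h1.sub h2').sub h3'
        exact h3
      exact hder.hasDerivWithinAt
    have hb1 : ∀ t ∈ Ico (0:ℝ) 1, ‖Φ t - Φ 0 - t * Φ₂ 0‖ ≤ M₃ * ‖Δ‖^3 := by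
      intro t ht
      rw [Real.norm_eq_abs]
      have := htay1 t (Ico_subset_Icc_self ht)
      nlinarith [ht.1, ht.2, abs_nonneg (Φ t - Φ 0 - t * Φ₂ 0),
        mul_nonneg hM0 (pow_nonneg hΔ0 3)]
    have hfin := norm_image_sub_le_of_norm_deriv_le_segment_01' hχd hb1
    have hval : χ 1 - χ 0 = U b - U a - Φ 0 - Φ₂ 0 / 2 := by
      simp [hχdef, hc0, hc1]; ring
    rwa [hval, Real.norm_eq_abs] at hfin
  -- names for the gradients
  have hgaG : ‖gradient U a‖ ≤ G := hgG a haK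
  -- bound on the derivative of φ₂ along the segment
  have hΦ₃b : ∀ t ∈ Icc (0:ℝ) 1,
      Φ₃ t ≤ h*L*G*W - (h^2/2)*(A₂*ρ) + h^2*Tr*(2*L^2*G*δm) := by
    intro t ht
    have hxK : c t ∈ K := hcK t ht
    have hgx : ‖gradient U (c t)‖ ≤ G := hgG _ hxK
    have hgagx : ‖gradient U a - gradient U (c t)‖ ≤ L * δm := by
      rw [norm_sub_rev]
      exact (hglip _ hxK).trans
        (mul_le_mul_of_nonneg_left ((hdist t ht).trans hΔnorm) hL0)
    have hΔw : Δ = h • w - (h^2*κ) • gradient U a := by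
      rw [hΔdef, hdecomp, smul_sub, smul_smul]
      have e : h * (h*κ) = h^2*κ := by ring
      rw [e]
    have e2 : Φ₃ t = h * ((fderiv ℝ (fderiv ℝ U) (c t)) w (gradient U a))
        - (h^2*κ) * ((fderiv ℝ (fderiv ℝ U) (c t)) (gradient U a) (gradient U a)) := by
      simp only [hΦ₃def, hΔw, map_sub, map_smul, ContinuousLinearMap.sub_apply,
        ContinuousLinearMap.coe_smul', Pi.smul_apply, smul_eq_mul]
    have hBop : ‖fderiv ℝ (fderiv ℝ U) (c t)‖ ≤ L := hLK _ hxK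
    have happly : ∀ v u : E, |(fderiv ℝ (fderiv ℝ U) (c t)) v u| ≤ L * ‖v‖ * ‖u‖ := by
      intro v u
      rw [← Real.norm_eq_abs]
      calc ‖(fderiv ℝ (fderiv ℝ U) (c t)) v u‖
          ≤ ‖(fderiv ℝ (fderiv ℝ U) (c t)) v‖ * ‖u‖ := ContinuousLinearMap.le_opNorm _ u
        _ ≤ (‖fderiv ℝ (fderiv ℝ U) (c t)‖ * ‖v‖) * ‖u‖ :=
            mul_le_mul_of_nonneg_right (ContinuousLinearMap.le_opNorm _ v) (norm_nonneg _)
        _ ≤ (L * ‖v‖) * ‖u‖ := by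
            apply mul_le_mul_of_nonneg_right _ (norm_nonneg _)
            exact mul_le_mul_of_nonneg_right hBop (norm_nonneg _)
    have bound1 : h * ((fderiv ℝ (fderiv ℝ U) (c t)) w (gradient U a)) ≤ h * (L*G*W) := by
      apply mul_le_mul_of_nonneg_left _ hh.le
      have := (abs_le.1 (happly w (gradient U a))).2
      have h2 := mul3_le hL0 (norm_nonneg w) (norm_nonneg (gradient U a)) hW hgaG
      linarith
    have hexp : (fderiv ℝ (fderiv ℝ U) (c t)) (gradient U a) (gradient U a)
        = (fderiv ℝ (fderiv ℝ U) (c t)) (gradient U (c t)) (gradient U (c t))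
          + (fderiv ℝ (fderiv ℝ U) (c t)) (gradient U a - gradient U (c t)) (gradient U (c t))
          + (fderiv ℝ (fderiv ℝ U) (c t)) (gradient U a)
              (gradient U a - gradient U (c t)) := by
      simp only [map_sub, ContinuousLinearMap.sub_apply]
      ring
    have c1 := (abs_le.1 (happly (gradient U a - gradient U (c t)) (gradient U (c t)))).1
    have c2 := (abs_le.1 (happly (gradient U a) (gradient U a - gradient U (c t)))).1
    have c3 : A₂ * ρ ≤ (fderiv ℝ (fderiv ℝ U) (c t)) (gradient U (c t)) (gradient U (c t)) :=
      hhess _ hxK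
    have bound2 : A₂*ρ - 2*L^2*G*δm
        ≤ (fderiv ℝ (fderiv ℝ U) (c t)) (gradient U a) (gradient U a) := by
      rw [hexp]
      have d1 : L * ‖gradient U a - gradient U (c t)‖ * ‖gradient U (c t)‖ ≤ L*(L*δm)*G :=
        mul3_le hL0 (norm_nonneg _) (norm_nonneg _) hgagx hgx
      have d2 : L * ‖gradient U a‖ * ‖gradient U a - gradient U (c t)‖ ≤ L*G*(L*δm) :=
        mul3_le hL0 (norm_nonneg _) (norm_nonneg _) hgaG hgagx
      linarith
    have k0 : h^2*κ*(A₂*ρ - 2*L^2*G*δm)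
        ≤ h^2*κ*((fderiv ℝ (fderiv ℝ U) (c t)) (gradient U a) (gradient U a)) := by
      apply mul_le_mul_of_nonneg_left bound2
      nlinarith [sq_nonneg h]
    have k1 : h^2*(1/2)*(A₂*ρ) ≤ h^2*κ*(A₂*ρ) := by
      apply mul_le_mul_of_nonneg_right _ hρ0
      nlinarith [sq_nonneg h]
    have k2 : h^2*κ*(2*L^2*G*δm) ≤ h^2*Tr*(2*L^2*G*δm) := by
      apply mul_le_mul_of_nonneg_right _ (by positivity)
      nlinarith [sq_nonneg h]
    rw [e2]
    linarith [k0, k1, k2, bound1]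
  have hS1 : φ₂ 1 - φ₂ 0 ≤ h*L*G*W - (h^2/2)*(A₂*ρ) + h^2*Tr*(2*L^2*G*δm) :=
    one_sided_mvt (fun t _ => hφ₂d t) hΦ₃b
  -- identify φ₂ endpoints with inner products
  have hφ₂1 : φ₂ 1 = ⟪gradient U a, gradient U b⟫ := by
    have e := inner_gradient U b (gradient U a)
    simp only [hφ₂def, hc1]
    rw [← e, real_inner_comm]
  have hφ₂0 : φ₂ 0 = ⟪gradient U a, gradient U a⟫ := by
    have e := inner_gradient U a (gradient U a)
    simp only [hφ₂def, hc0]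
    rw [← e]
  -- gradient difference bound
  have hgba : ‖gradient U b - gradient U a‖ ≤ L * δm := by
    have h1 := hglip b hbK
    have h2 : ‖b - a‖ ≤ δm := by
      have : b - a = Δ := by rw [hb]; abel
      rw [this]; exact hΔnorm
    calc ‖gradient U b - gradient U a‖ ≤ L * ‖b - a‖ := h1
      _ ≤ L * δm := mul_le_mul_of_nonneg_left h2 hL0
  -- gradient-square inequality
  have hSq : ‖gradient U b‖^2 - ‖gradient U a‖^2
      ≤ 2*(h*L*G*W - (h^2/2)*(A₂*ρ) + h^2*Tr*(2*L^2*G*δm)) + (L*δm)^2 := by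
    have hid := norm_add_sq_real (gradient U a) (gradient U b - gradient U a)
    rw [add_sub_cancel] at hid
    have hin : ⟪gradient U a, gradient U b - gradient U a⟫ = φ₂ 1 - φ₂ 0 := by
      rw [inner_sub_right, hφ₂1, hφ₂0]
    have hsq2 : ‖gradient U b - gradient U a‖^2 ≤ (L*δm)^2 := by
      apply pow_le_pow_left₀ (norm_nonneg _) hgba
    nlinarith [hS1]
  -- trapezoidal error bound
  have hEl : U b - U a - (Φ 0 + Φ 1)/2 ≤ (3/2)*M₃*δm^3 := by
    have h1 := abs_le.1 htay2
    have h2 := abs_le.1 (htay1 1 (right_mem_Icc.2 zero_le_one))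
    have h3 : M₃*‖Δ‖^3 ≤ M₃*δm^3 := by
      apply mul_le_mul_of_nonneg_left _ hM0
      exact pow_le_pow_left₀ hΔ0 hΔnorm 3
    have h4 := h1.1; have h5 := h1.2; have h6 := h2.1; have h7 := h2.2
    nlinarith
  -- Hamiltonian difference identity
  have hping : pa = pha + (h/2) • gradient U a := by rw [hpha]; abel
  have hΦ0 : Φ 0 = h * ⟪pha, gradient U a⟫ := by
    simp only [hΦdef, hc0]
    rw [← inner_gradient U a Δ, real_inner_comm, hΔdef, real_inner_smul_left]
  have hΦ1 : Φ 1 = h * ⟪pha, gradient U b⟫ := by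
    simp only [hΦdef, hc1]
    rw [← inner_gradient U b Δ, real_inner_comm, hΔdef, real_inner_smul_left]
  have hnb : ‖pha - (h/2) • gradient U b‖^2
      = ‖pha‖^2 - 2*((h/2)*⟪pha, gradient U b⟫) + (h/2)^2*‖gradient U b‖^2 := by
    rw [norm_sub_sq_real, real_inner_smul_right, norm_smul, mul_pow, Real.norm_eq_abs,
      sq_abs]
  have hna : ‖pa‖^2
      = ‖pha‖^2 + 2*((h/2)*⟪pha, gradient U a⟫) + (h/2)^2*‖gradient U a‖^2 := by
    rw [hping, norm_add_sq_real, real_inner_smul_right, norm_smul, mul_pow,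
      Real.norm_eq_abs, sq_abs]
  have hfinal : U b + ‖pha - (h/2) • gradient U b‖^2/2 - (U a + ‖pa‖^2/2)
      = (U b - U a - (Φ 0 + Φ 1)/2)
        + (h^2/8)*(‖gradient U b‖^2 - ‖gradient U a‖^2) := by
    rw [hnb, hna, hΦ0, hΦ1]
    ring
  have hmul : (h^2/8)*(‖gradient U b‖^2 - ‖gradient U a‖^2)
      ≤ (h^2/8)*(2*(h*L*G*W - (h^2/2)*(A₂*ρ) + h^2*Tr*(2*L^2*G*δm)) + (L*δm)^2) :=
    mul_le_mul_of_nonneg_left hSq (by positivity)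
  linarith [hmul, hEl, hcond, hfinal]



/-- Lower bound for `y ^ s` when `y` is comparable to `r`. -/
lemma rpow_base_lower {s y r : ℝ} (hr : 1 ≤ r) (h1 : r / 2 ≤ y) (h2 : y ≤ 2 * r) :
    min ((4:ℝ) ^ s) ((4:ℝ) ^ (-s)) * (1 + r) ^ s ≤ y ^ s := by
  have hy : 0 < y := lt_of_lt_of_le (by linarith) h1
  have hr0 : (0:ℝ) < 1 + r := by linarith
  rcases le_or_gt 0 s with hs | hs
  · have key : ((1 + r) / 4) ^ s ≤ y ^ s := by
      apply Real.rpow_le_rpow (by positivity) (by linarith) hs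
    calc min ((4:ℝ) ^ s) ((4:ℝ) ^ (-s)) * (1 + r) ^ s
        ≤ (4:ℝ) ^ (-s) * (1 + r) ^ s := by
          apply mul_le_mul_of_nonneg_right (min_le_right _ _) (by positivity)
      _ = ((1 + r) / 4) ^ s := by
          rw [Real.div_rpow (by positivity) (by norm_num), Real.rpow_neg (by norm_num)]
          ring
      _ ≤ y ^ s := key
  · have key : (4 * (1 + r)) ^ s ≤ y ^ s :=
      Real.rpow_le_rpow_of_nonpos hy (by linarith) hs.le
    calc min ((4:ℝ) ^ s) ((4:ℝ) ^ (-s)) * (1 + r) ^ s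
        ≤ (4:ℝ) ^ s * (1 + r) ^ s := by
          apply mul_le_mul_of_nonneg_right (min_le_left _ _) (by positivity)
      _ = (4 * (1 + r)) ^ s := (Real.mul_rpow (by norm_num) (by positivity)).symm
      _ ≤ y ^ s := key



variable {E : Type*} [NormedAddCommGroup E] [InnerProductSpace ℝ E] [CompleteSpace E]

local notation "⟪" x ", " y "⟫" => @inner ℝ _ _ x y

lemma norm_gradient (U : E → ℝ) (x : E) : ‖gradient U x‖ = ‖fderiv ℝ U x‖ :=
  LinearIsometryEquiv.norm_map _ _

lemma norm_gradient_sub (U : E → ℝ) (x y : E) :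
    ‖gradient U x - gradient U y‖ = ‖fderiv ℝ U x - fderiv ℝ U y‖ := by
  rw [gradient, gradient, ← map_sub, LinearIsometryEquiv.norm_map]

lemma fderiv2_apply (U : E → ℝ) (x v w : E) :
    fderiv ℝ (fderiv ℝ U) x v w = iteratedFDeriv ℝ 2 U x ![v, w] := by
  rw [iteratedFDeriv_two_apply]
  simp

lemma abs_fderiv2_apply_le (U : E → ℝ) (x v w : E) :
    |fderiv ℝ (fderiv ℝ U) x v w| ≤ ‖iteratedFDeriv ℝ 2 U x‖ * (‖v‖ * ‖w‖) := by
  rw [fderiv2_apply]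
  calc |iteratedFDeriv ℝ 2 U x ![v, w]| ≤ ‖iteratedFDeriv ℝ 2 U x‖ * ∏ i, ‖![v, w] i‖ :=
        (iteratedFDeriv ℝ 2 U x).le_opNorm _
    _ = ‖iteratedFDeriv ℝ 2 U x‖ * (‖v‖ * ‖w‖) := by
        rw [Fin.prod_univ_two]; simp

lemma norm_fderiv2_le (U : E → ℝ) (x : E) :
    ‖fderiv ℝ (fderiv ℝ U) x‖ ≤ ‖iteratedFDeriv ℝ 2 U x‖ := by
  refine ContinuousLinearMap.opNorm_le_bound _ (norm_nonneg _) fun v => ?_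
  refine ContinuousLinearMap.opNorm_le_bound _ (by positivity) fun w => ?_
  calc |fderiv ℝ (fderiv ℝ U) x v w| ≤ ‖iteratedFDeriv ℝ 2 U x‖ * (‖v‖ * ‖w‖) :=
        abs_fderiv2_apply_le U x v w
    _ = ‖iteratedFDeriv ℝ 2 U x‖ * ‖v‖ * ‖w‖ := by ring

lemma norm_fderiv3_le (U : E → ℝ) (x : E) :
    ‖fderiv ℝ (fderiv ℝ (fderiv ℝ U)) x‖ ≤ ‖iteratedFDeriv ℝ 3 U x‖ := by
  refine ContinuousLinearMap.opNorm_le_bound _ (norm_nonneg _) fun u => ?_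
  refine ContinuousLinearMap.opNorm_le_bound _ (by positivity) fun v => ?_
  have h1 : fderiv ℝ (fderiv ℝ (fderiv ℝ U)) x u v
      = iteratedFDeriv ℝ 2 (fderiv ℝ U) x ![u, v] := by
    rw [iteratedFDeriv_two_apply]; simp
  rw [h1]
  calc ‖iteratedFDeriv ℝ 2 (fderiv ℝ U) x ![u, v]‖
      ≤ ‖iteratedFDeriv ℝ 2 (fderiv ℝ U) x‖ * ∏ i, ‖![u, v] i‖ :=
        (iteratedFDeriv ℝ 2 (fderiv ℝ U) x).le_opNorm _
    _ = ‖iteratedFDeriv ℝ 3 U x‖ * ‖u‖ * ‖v‖ := by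
        rw [Fin.prod_univ_two, norm_iteratedFDeriv_fderiv]; simp; ring



variable {E : Type*} [NormedAddCommGroup E] [NormedSpace ℝ E]

/-- Growth bound for a function whose derivative decays like `(1+‖x‖)^(m-2)`. -/
lemma growth_of_deriv_decay {F : Type*} [NormedAddCommGroup F] [NormedSpace ℝ F]
    (f : E → F) (f' : E → E →L[ℝ] F) {m A₁ : ℝ} (hm1 : 1 < m) (hA₁ : 0 ≤ A₁)
    (hdiff : ∀ y, HasFDerivAt f (f' y) y)
    (hbound : ∀ y, ‖f' y‖ ≤ A₁ * (1 + ‖y‖) ^ (m - 2)) (x : E) :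
    ‖f x‖ ≤ (‖f 0‖ + A₁ / (m - 1)) * (1 + ‖x‖) ^ (m - 1) := by
  have hm1' : (0:ℝ) < m - 1 := by linarith
  set B : ℝ → ℝ := fun t => ‖f 0‖ + A₁ / (m - 1) * (1 + t * ‖x‖) ^ (m - 1) with hB
  have hBderiv : ∀ t : ℝ, 0 ≤ t →
      HasDerivAt B (A₁ / (m - 1) * ((m - 1) * (1 + t * ‖x‖) ^ (m - 2) * ‖x‖)) t := by
    intro t ht
    have hpos : (0:ℝ) < 1 + t * ‖x‖ := by positivity
    have h1 : HasDerivAt (fun t : ℝ => 1 + t * ‖x‖) ‖x‖ t := by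
      simpa using ((hasDerivAt_id t).mul_const ‖x‖).const_add 1
    have h2 := h1.rpow_const (p := m - 1) (Or.inl hpos.ne')
    have h3 := (h2.const_mul (A₁ / (m - 1))).const_add ‖f 0‖
    refine h3.congr_deriv ?_
    ring
  have hfd : ∀ t : ℝ, HasDerivAt (fun s => f (s • x)) (f' (t • x) x) t := fun t => by
    simpa [Function.comp_def] using (hdiff (t • x)).comp_hasDerivAt t ((hasDerivAt_id t).smul_const x)
  have key : ∀ t ∈ Icc (0:ℝ) 1, ‖f (t • x)‖ ≤ B t := by
    apply image_norm_le_of_norm_deriv_right_le_deriv_boundary'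
      (f := fun t => f (t • x)) (f' := fun t => f' (t • x) x)
      (B := B) (B' := fun t => A₁ / (m - 1) * ((m - 1) * (1 + t * ‖x‖) ^ (m - 2) * ‖x‖))
    · exact fun t _ => (hfd t).continuousAt.continuousWithinAt
    · exact fun t _ => (hfd t).hasDerivWithinAt
    · simp only [hB, zero_smul, zero_mul, add_zero, Real.one_rpow, mul_one]
      linarith [div_nonneg hA₁ hm1'.le]
    · exact fun t ht => ((hBderiv t ht.1).continuousAt).continuousWithinAt
    · exact fun t ht => (hBderiv t ht.1).hasDerivWithinAt
    · intro t ht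
      calc ‖f' (t • x) x‖ ≤ ‖f' (t • x)‖ * ‖x‖ := (f' (t • x)).le_opNorm x
        _ ≤ A₁ * (1 + ‖t • x‖) ^ (m - 2) * ‖x‖ := by
            apply mul_le_mul_of_nonneg_right (hbound _) (norm_nonneg _)
        _ = A₁ / (m - 1) * ((m - 1) * (1 + t * ‖x‖) ^ (m - 2) * ‖x‖) := by
            rw [norm_smul, Real.norm_eq_abs, abs_of_nonneg ht.1]
            field_simp
  have h1 := key 1 (right_mem_Icc.2 zero_le_one)
  rw [one_smul] at h1
  have h2 : B 1 ≤ (‖f 0‖ + A₁ / (m - 1)) * (1 + ‖x‖) ^ (m - 1) := by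
    have hge : (1:ℝ) ≤ (1 + ‖x‖) ^ (m - 1) :=
      Real.one_le_rpow (by linarith [norm_nonneg x]) hm1'.le
    simp only [hB, one_mul]
    have : ‖f 0‖ * 1 ≤ ‖f 0‖ * (1 + ‖x‖) ^ (m - 1) :=
      mul_le_mul_of_nonneg_left hge (norm_nonneg _)
    nlinarith [div_nonneg hA₁ hm1'.le]
  exact h1.trans h2


/-- Helper: `(1 + r/2) ^ s ≤ 4 * (1+r) ^ s` for `s ∈ [-2, 0]`, `r ≥ 1`. -/
lemma half_base_rpow_le {s r : ℝ} (hr : 1 ≤ r) (hs : s ≤ 0) (hs2 : -s ≤ 2) :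
    (1 + r/2) ^ s ≤ 4 * (1 + r) ^ s := by
  have hu : (0:ℝ) < 1 + r := by linarith
  have h1 : ((1 + r)/2) ^ s ≥ (1 + r/2) ^ s := by
    apply Real.rpow_le_rpow_of_nonpos (by linarith) (by linarith) hs
  have h2 : ((1 + r)/2) ^ s = (1 + r) ^ s * ((2:ℝ) ^ (-s)) := by
    rw [Real.div_rpow hu.le (by norm_num), Real.rpow_neg (by norm_num)]
    field_simp
  have h3 : (2:ℝ) ^ (-s) ≤ 4 := by
    calc (2:ℝ) ^ (-s) ≤ (2:ℝ) ^ (2:ℝ) := Real.rpow_le_rpow_of_exponent_le one_le_two hs2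
      _ = 4 := by
        rw [show (2:ℝ) = ((2:ℕ):ℝ) by norm_num, Real.rpow_natCast]
        norm_num
  calc (1 + r/2) ^ s ≤ (1 + r) ^ s * ((2:ℝ) ^ (-s)) := by rw [← h2]; exact h1
    _ ≤ (1 + r) ^ s * 4 := by
        apply mul_le_mul_of_nonneg_left h3 (Real.rpow_nonneg hu.le s)
    _ = 4 * (1 + r) ^ s := by ring

/-- Helper: `(1 + 2r) ^ s ≤ 2 * (1+r) ^ s` for `s ∈ [0,1]`, `r ≥ 0`. -/
lemma two_base_rpow_le {s r : ℝ} (hr : 0 ≤ r) (hs : 0 ≤ s) (hs1 : s ≤ 1) :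
    (1 + 2*r) ^ s ≤ 2 * (1 + r) ^ s := by
  have hu : (0:ℝ) < 1 + r := by linarith
  calc (1 + 2*r) ^ s ≤ (2*(1 + r)) ^ s := by
        apply Real.rpow_le_rpow (by linarith) (by linarith) hs
    _ = (2:ℝ) ^ s * (1 + r) ^ s := Real.mul_rpow (by norm_num) hu.le
    _ ≤ 2 * (1 + r) ^ s := by
        apply mul_le_mul_of_nonneg_right _ (Real.rpow_nonneg hu.le s)
        calc (2:ℝ) ^ s ≤ (2:ℝ) ^ (1:ℝ) := Real.rpow_le_rpow_of_exponent_le one_le_two hs1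
          _ = 2 := Real.rpow_one 2

end HMCAux


/-- under A2(m)(i)–(ii) with `m ∈ (1,2)`, for every `h > 0` the Hamiltonian
does not increase along `T` leapfrog steps, provided the starting position is far enough
from the origin and the momentum satisfies `‖p₀‖ ≤ ‖q₀‖^γ`. -/
theorem hmc_hamiltonian_decreases_subquadratic {d : ℕ}
    (U : EuclideanSpace ℝ (Fin d) → ℝ) (m : ℝ) (hm : m ∈ Set.Ioo (1 : ℝ) 2)
    (hU : ContDiff ℝ 3 U)
    (A₁ : ℝ) (hA₁ : 0 ≤ A₁)
    (hD : ∀ q : EuclideanSpace ℝ (Fin d),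
      ‖iteratedFDeriv ℝ 2 U q‖ ≤ A₁ * (1 + ‖q‖) ^ (m - 2) ∧
      ‖iteratedFDeriv ℝ 3 U q‖ ≤ A₁ * (1 + ‖q‖) ^ (m - 3))
    (A₂ : ℝ) (hA₂ : 0 < A₂) (R : ℝ) (hR : 0 ≤ R)
    (hhess : ∀ q : EuclideanSpace ℝ (Fin d), R ≤ ‖q‖ →
      A₂ * ‖q‖ ^ (3 * m - 4) ≤
        iteratedFDeriv ℝ 2 U q ![gradient U q, gradient U q])
    (T : ℕ) (hT : 1 ≤ T) (γ : ℝ) (hγ : γ ∈ Set.Ico (0 : ℝ) (m - 1))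
    (h : ℝ) (hh : 0 < h) :
    ∃ R_H ≥ (0 : ℝ), ∀ q₀ p₀ : EuclideanSpace ℝ (Fin d),
      R_H ≤ ‖q₀‖ → ‖p₀‖ ≤ ‖q₀‖ ^ γ →
      hamiltonian U ((leapfrog U h)^[T] (q₀, p₀)) ≤ hamiltonian U (q₀, p₀) := by
  obtain ⟨hm1, hm2⟩ := hm
  obtain ⟨hγ0, hγm⟩ := hγ
  -- differentiability of U and its derivatives
  have hU1 : ∀ y, HasFDerivAt U (fderiv ℝ U y) y := fun y =>
    ((hU.differentiable (by norm_num)) y).hasFDerivAt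
  have hUc2 : ContDiff ℝ 2 (fderiv ℝ U) := hU.fderiv_right (by norm_num)
  have hU2 : ∀ y, HasFDerivAt (fderiv ℝ U) (fderiv ℝ (fderiv ℝ U) y) y := fun y =>
    ((hUc2.differentiable (by norm_num)) y).hasFDerivAt
  have hUc1 : ContDiff ℝ 1 (fderiv ℝ (fderiv ℝ U)) := hUc2.fderiv_right (by norm_num)
  have hU3 : ∀ y, HasFDerivAt (fderiv ℝ (fderiv ℝ U))
      (fderiv ℝ (fderiv ℝ (fderiv ℝ U)) y) y := fun y =>
    ((hUc1.differentiable (by norm_num)) y).hasFDerivAt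
  -- derivative norm bounds
  have hb2 : ∀ y, ‖fderiv ℝ (fderiv ℝ U) y‖ ≤ A₁ * (1+‖y‖)^(m-2) := fun y =>
    (HMCAux.norm_fderiv2_le U y).trans (hD y).1
  have hb3 : ∀ y, ‖fderiv ℝ (fderiv ℝ (fderiv ℝ U)) y‖ ≤ A₁ * (1+‖y‖)^(m-3) := fun y =>
    (HMCAux.norm_fderiv3_le U y).trans (hD y).2
  set Cg : ℝ := ‖fderiv ℝ U 0‖ + A₁/(m-1) with hCgdef
  have hCg0 : 0 ≤ Cg := add_nonneg (norm_nonneg _) (div_nonneg hA₁ (by linarith))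
  have hgrow : ∀ y, ‖fderiv ℝ U y‖ ≤ Cg * (1+‖y‖)^(m-1) := fun y =>
    HMCAux.growth_of_deriv_decay (fderiv ℝ U) (fderiv ℝ (fderiv ℝ U)) hm1 hA₁ hU2 hb2 y
  have hhess2 : ∀ x, R ≤ ‖x‖ → A₂*‖x‖^(3*m-4)
      ≤ fderiv ℝ (fderiv ℝ U) x (gradient U x) (gradient U x) := by
    intro x hx
    have h1 := hhess x hx
    rwa [← HMCAux.fderiv2_apply] at h1
  -- fixed constants
  set Treal : ℝ := (T : ℝ) with hTrdef
  have hT1 : 1 ≤ Treal := by rw [hTrdef]; exact_mod_cast hT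
  have hT0 : 0 ≤ Treal := by linarith
  set C1 : ℝ := 1 + Treal*h*(2*Cg) with hC1def
  have hC10 : 0 < C1 := by positivity
  set CD : ℝ := h*C1 with hCDdef
  have hCD0 : 0 < CD := by positivity
  set CE : ℝ := h*Treal^2*(4*A₁)*CD with hCEdef
  have hCE0 : 0 ≤ CE := by positivity
  set c₀ : ℝ := min ((4:ℝ)^(3*m-4)) ((4:ℝ)^(-(3*m-4))) with hc₀def
  have hc₀0 : 0 < c₀ := lt_min (Real.rpow_pos_of_pos (by norm_num) _)
    (Real.rpow_pos_of_pos (by norm_num) _)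
  set KA : ℝ := (3/2)*(4*A₁)*CD^3
      + (h^2/8)*(2*(h^2*Treal*(2*(4*A₁)^2*(2*Cg)*CD)) + 2*(h*(4*A₁)*(2*Cg)*CE)
        + ((4*A₁)*CD)^2) with hKAdef
  have hKA0 : 0 ≤ KA := by positivity
  set KC : ℝ := (h^2/8)*(2*(h*(4*A₁)*(2*Cg))) with hKCdef
  have hKC0 : 0 ≤ KC := by positivity
  set ε : ℝ := (h^4*A₂/8)*c₀ with hεdef
  have hε0 : 0 < ε := by positivity
  -- eventual conditions
  have hev : ∀ᶠ r in atTop, ((1:ℝ) ≤ r ∧ 2*R ≤ r ∧ 4*Treal*h*C1 ≤ (1+r)^(2-m) ∧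
      KA*(1+r)^(m-2) + KC*(1+r)^(γ-m+1) < ε) := by
    have hshift : Tendsto (fun r : ℝ => 1 + r) atTop atTop :=
      tendsto_atTop_add_const_left atTop 1 tendsto_id
    have p3 : Tendsto (fun r : ℝ => (1+r)^(2-m)) atTop atTop :=
      (tendsto_rpow_atTop (by linarith)).comp hshift
    have p4a : Tendsto (fun r : ℝ => (1+r)^(m-2)) atTop (nhds 0) := by
      have h0 := (tendsto_rpow_neg_atTop (show (0:ℝ) < 2-m by linarith)).comp hshift
      have he : (fun x : ℝ => x ^ (-(2-m))) ∘ (fun r : ℝ => 1 + r)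
          = fun r : ℝ => (1+r)^(m-2) := by
        funext r
        simp only [Function.comp_apply]
        congr 1
        ring
      rwa [he] at h0
    have p4b : Tendsto (fun r : ℝ => (1+r)^(γ-m+1)) atTop (nhds 0) := by
      have h0 := (tendsto_rpow_neg_atTop (show (0:ℝ) < (m-1)-γ by linarith)).comp hshift
      have he : (fun x : ℝ => x ^ (-((m-1)-γ))) ∘ (fun r : ℝ => 1 + r)
          = fun r : ℝ => (1+r)^(γ-m+1) := by
        funext r
        simp only [Function.comp_apply]
        congr 1
        ring
      rwa [he] at h0
    have p4 : Tendsto (fun r : ℝ => KA*(1+r)^(m-2) + KC*(1+r)^(γ-m+1)) atTop (nhds 0) := by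
      have := (p4a.const_mul KA).add (p4b.const_mul KC)
      simpa using this
    filter_upwards [eventually_ge_atTop (1:ℝ), eventually_ge_atTop (2*R),
      p3.eventually_ge_atTop (4*Treal*h*C1), p4.eventually (gt_mem_nhds hε0)]
      with r h1 h2 h3 h4
    exact ⟨h1, h2, h3, h4⟩
  obtain ⟨R₀, hR₀⟩ := eventually_atTop.mp hev
  refine ⟨max R₀ 0, le_max_right _ _, ?_⟩
  intro q₀ p₀ hq₀ hp₀
  obtain ⟨hc1, hc2, hc3, hc4⟩ := hR₀ ‖q₀‖ (le_trans (le_max_left _ _) hq₀)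
  set r : ℝ := ‖q₀‖ with hrdef
  have hr1 : (1:ℝ) ≤ r := hc1
  have hr0 : (0:ℝ) < r := by linarith
  have hu0 : (0:ℝ) < 1 + r := by linarith
  have hu1 : (1:ℝ) ≤ 1 + r := by linarith
  -- r-dependent constants
  set P : ℝ := r^γ with hPdef
  set G : ℝ := Cg*(1+2*r)^(m-1) with hGdef
  set L : ℝ := A₁*(1+r/2)^(m-2) with hLdef
  set M₃ : ℝ := A₁*(1+r/2)^(m-3) with hM₃def
  set Pm : ℝ := P + Treal*h*G with hPmdef
  set Dm : ℝ := h*Pm with hDmdef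
  set Em : ℝ := h*Treal^2*L*Dm with hEmdef
  set W : ℝ := P + Em with hWdef
  set ρ : ℝ := c₀*(1+r)^(3*m-4) with hρdef
  have hP0 : 0 ≤ P := Real.rpow_nonneg hr0.le γ
  have hG0 : 0 ≤ G := mul_nonneg hCg0 (Real.rpow_nonneg (by linarith) _)
  have hL0 : 0 ≤ L := mul_nonneg hA₁ (Real.rpow_nonneg (by linarith) _)
  have hM₃0 : 0 ≤ M₃ := mul_nonneg hA₁ (Real.rpow_nonneg (by linarith) _)
  have hPm0 : 0 ≤ Pm := by positivity
  have hDm0 : 0 ≤ Dm := by positivity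
  have hEm0 : 0 ≤ Em := by positivity
  have hW0 : 0 ≤ W := by positivity
  have hρ0 : 0 ≤ A₂*ρ := by positivity
  -- the ball
  set K : Set (EuclideanSpace ℝ (Fin d)) := Metric.closedBall q₀ (r/2) with hKdef
  have hKconv : Convex ℝ K := convex_closedBall _ _
  have hKnorm : ∀ x ∈ K, r/2 ≤ ‖x‖ ∧ ‖x‖ ≤ 2*r := by
    intro x hx
    rw [hKdef, Metric.mem_closedBall, dist_eq_norm] at hx
    constructor
    · have := norm_sub_norm_le x q₀
      rw [← hrdef] at *
      linarith [abs_le.1 (abs_norm_sub_norm_le x q₀)]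
    · have := norm_le_norm_add_norm_sub' x q₀
      have h2 := norm_add_le (x - q₀) q₀
      have h3 : x = (x - q₀) + q₀ := by abel
      calc ‖x‖ = ‖(x - q₀) + q₀‖ := by rw [← h3]
        _ ≤ ‖x - q₀‖ + ‖q₀‖ := norm_add_le _ _
        _ ≤ r/2 + r := by rw [← hrdef]; linarith
        _ ≤ 2*r := by linarith
  have hLK : ∀ x ∈ K, ‖fderiv ℝ (fderiv ℝ U) x‖ ≤ L := by
    intro x hx
    refine (hb2 x).trans ?_
    rw [hLdef]
    apply mul_le_mul_of_nonneg_left _ hA₁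
    exact Real.rpow_le_rpow_of_nonpos (by linarith) (by linarith [(hKnorm x hx).1])
      (by linarith)
  have hMK : ∀ x ∈ K, ‖fderiv ℝ (fderiv ℝ (fderiv ℝ U)) x‖ ≤ M₃ := by
    intro x hx
    refine (hb3 x).trans ?_
    rw [hM₃def]
    apply mul_le_mul_of_nonneg_left _ hA₁
    exact Real.rpow_le_rpow_of_nonpos (by linarith) (by linarith [(hKnorm x hx).1])
      (by linarith)
  have hGK : ∀ x ∈ K, ‖gradient U x‖ ≤ G := by
    intro x hx
    rw [HMCAux.norm_gradient]
    refine (hgrow x).trans ?_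
    rw [hGdef]
    apply mul_le_mul_of_nonneg_left _ hCg0
    apply Real.rpow_le_rpow (by positivity) (by linarith [(hKnorm x hx).2]) (by linarith)
  have hf'lip : ∀ x ∈ K, ∀ y ∈ K, ‖fderiv ℝ U x - fderiv ℝ U y‖ ≤ L * ‖x - y‖ := by
    intro x hx y hy
    exact hKconv.norm_image_sub_le_of_norm_hasFDerivWithin_le
      (fun z hz => (hU2 z).hasFDerivWithinAt) (fun z hz => hLK z hz) hy hx
  have hglipK : ∀ x ∈ K, ∀ y ∈ K, ‖gradient U x - gradient U y‖ ≤ L * ‖x - y‖ := by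
    intro x hx y hy
    rw [HMCAux.norm_gradient_sub]
    exact hf'lip x hx y hy
  have hf''lip : ∀ x ∈ K, ∀ y ∈ K,
      ‖fderiv ℝ (fderiv ℝ U) x - fderiv ℝ (fderiv ℝ U) y‖ ≤ M₃ * ‖x - y‖ := by
    intro x hx y hy
    exact hKconv.norm_image_sub_le_of_norm_hasFDerivWithin_le
      (fun z hz => (hU3 z).hasFDerivWithinAt) (fun z hz => hMK z hz) hy hx
  have hhessK : ∀ x ∈ K, A₂ * ρ ≤ fderiv ℝ (fderiv ℝ U) x (gradient U x) (gradient U x) := by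
    intro x hx
    obtain ⟨hx1, hx2⟩ := hKnorm x hx
    refine le_trans ?_ (hhess2 x (by linarith))
    rw [hρdef]
    have := HMCAux.rpow_base_lower (s := 3*m-4) hr1 hx1 hx2
    rw [← hc₀def] at this
    calc A₂ * (c₀*(1+r)^(3*m-4)) = A₂ * (c₀*(1+r)^(3*m-4)) := rfl
      _ ≤ A₂ * ‖x‖^(3*m-4) := mul_le_mul_of_nonneg_left this hA₂.le
  -- asymptotic bounds on the constants
  have hrpow : ∀ a b : ℝ, (1+r)^a*(1+r)^b = (1+r)^(a+b) := fun a b =>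
    (Real.rpow_add hu0 a b).symm
  have bP : P ≤ (1+r)^γ := by
    rw [hPdef]; exact Real.rpow_le_rpow hr0.le (by linarith) hγ0
  have bPγ : (1+r)^γ ≤ (1+r)^(m-1) := Real.rpow_le_rpow_of_exponent_le hu1 (by linarith)
  have bG : G ≤ 2*Cg*(1+r)^(m-1) := by
    rw [hGdef]
    calc Cg*(1+2*r)^(m-1) ≤ Cg*(2*(1+r)^(m-1)) :=
          mul_le_mul_of_nonneg_left
            (HMCAux.two_base_rpow_le hr0.le (by linarith) (by linarith)) hCg0
      _ = 2*Cg*(1+r)^(m-1) := by ring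
  have bL : L ≤ 4*A₁*(1+r)^(m-2) := by
    rw [hLdef]
    calc A₁*(1+r/2)^(m-2) ≤ A₁*(4*(1+r)^(m-2)) :=
          mul_le_mul_of_nonneg_left
            (HMCAux.half_base_rpow_le hr1 (by linarith) (by linarith)) hA₁
      _ = 4*A₁*(1+r)^(m-2) := by ring
  have bM : M₃ ≤ 4*A₁*(1+r)^(m-3) := by
    rw [hM₃def]
    calc A₁*(1+r/2)^(m-3) ≤ A₁*(4*(1+r)^(m-3)) :=
          mul_le_mul_of_nonneg_left
            (HMCAux.half_base_rpow_le hr1 (by linarith) (by linarith)) hA₁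
      _ = 4*A₁*(1+r)^(m-3) := by ring
  have bPm : Pm ≤ C1*(1+r)^(m-1) := by
    rw [hPmdef]
    have b1 : Treal*h*G ≤ Treal*h*(2*Cg*(1+r)^(m-1)) :=
      mul_le_mul_of_nonneg_left bG (by positivity)
    calc P + Treal*h*G ≤ (1+r)^(m-1) + Treal*h*(2*Cg*(1+r)^(m-1)) := by
          linarith [bP.trans bPγ]
      _ = C1*(1+r)^(m-1) := by rw [hC1def]; ring
  have bDm : Dm ≤ CD*(1+r)^(m-1) := by
    rw [hDmdef, hCDdef]
    calc h*Pm ≤ h*(C1*(1+r)^(m-1)) := mul_le_mul_of_nonneg_left bPm hh.le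
      _ = h*C1*(1+r)^(m-1) := by ring
  have bLD : L*Dm ≤ (4*A₁*CD)*(1+r)^(2*m-3) := by
    calc L*Dm ≤ (4*A₁*(1+r)^(m-2))*(CD*(1+r)^(m-1)) :=
          mul_le_mul bL bDm hDm0 (by positivity)
      _ = (4*A₁*CD)*((1+r)^(m-2)*(1+r)^(m-1)) := by ring
      _ = (4*A₁*CD)*(1+r)^(2*m-3) := by
          rw [hrpow]
          have e : (m-2)+(m-1) = 2*m-3 := by ring
          rw [e]
  have bEm : Em ≤ CE*(1+r)^(2*m-3) := by
    rw [hEmdef, hCEdef]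
    calc h*Treal^2*L*Dm = (h*Treal^2)*(L*Dm) := by ring
      _ ≤ (h*Treal^2)*((4*A₁*CD)*(1+r)^(2*m-3)) :=
          mul_le_mul_of_nonneg_left bLD (by positivity)
      _ = h*Treal^2*(4*A₁)*(h*C1)*(1+r)^(2*m-3) := by rw [hCDdef]; ring
      _ = h*Treal^2*(4*A₁)*CD*(1+r)^(2*m-3) := by rw [hCDdef]
  have bW : W ≤ (1+r)^γ + CE*(1+r)^(2*m-3) := by
    rw [hWdef]; linarith [bP, bEm]
  -- numeric condition for the one-step lemma
  have hnum : (3/2)*M₃*Dm^3 + (h^2/8)*(2*(h^2*Treal*(2*L^2*G*Dm) + h*L*G*W) + (L*Dm)^2)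
      ≤ (h^4*A₂/8)*ρ := by
    have hpow3 : ((1+r)^(m-1))^(3:ℕ) = (1+r)^(3*m-3) := by
      rw [← Real.rpow_natCast ((1+r)^(m-1)) 3, ← Real.rpow_mul hu0.le]
      congr 1
      push_cast
      ring
    have hpow2 : ((1+r)^(m-2))^(2:ℕ) = (1+r)^(2*m-4) := by
      rw [← Real.rpow_natCast ((1+r)^(m-2)) 2, ← Real.rpow_mul hu0.le]
      congr 1
      push_cast
      ring
    have hpow2' : ((1+r)^(2*m-3))^(2:ℕ) = (1+r)^(4*m-6) := by
      rw [← Real.rpow_natCast ((1+r)^(2*m-3)) 2, ← Real.rpow_mul hu0.le]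
      congr 1
      push_cast
      ring
    have n1 : M₃*Dm^3 ≤ (4*A₁)*CD^3*(1+r)^(4*m-6) := by
      calc M₃*Dm^3 ≤ (4*A₁*(1+r)^(m-3))*(CD*(1+r)^(m-1))^3 := by
            apply mul_le_mul bM _ (by positivity) (by positivity)
            exact pow_le_pow_left₀ hDm0 bDm 3
        _ = (4*A₁)*CD^3*((1+r)^(m-3)*((1+r)^(m-1))^(3:ℕ)) := by ring
        _ = (4*A₁)*CD^3*(1+r)^(4*m-6) := by
            rw [hpow3, hrpow]
            have e : (m-3)+(3*m-3) = 4*m-6 := by ring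
            rw [e]
    have n2 : 2*L^2*G*Dm ≤ 2*((4*A₁)^2*(2*Cg)*CD)*(1+r)^(4*m-6) := by
      have bL2 : L^2 ≤ (4*A₁)^2*(1+r)^(2*m-4) := by
        calc L^2 ≤ (4*A₁*(1+r)^(m-2))^2 := pow_le_pow_left₀ hL0 bL 2
          _ = (4*A₁)^2*((1+r)^(m-2))^(2:ℕ) := by ring
          _ = (4*A₁)^2*(1+r)^(2*m-4) := by rw [hpow2]
      calc 2*L^2*G*Dm = 2*(L^2*G*Dm) := by ring
        _ ≤ 2*(((4*A₁)^2*(1+r)^(2*m-4))*(2*Cg*(1+r)^(m-1))*(CD*(1+r)^(m-1))) := by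
            apply mul_le_mul_of_nonneg_left _ (by norm_num)
            apply mul_le_mul _ bDm hDm0 (by positivity)
            apply mul_le_mul bL2 bG hG0 (by positivity)
        _ = 2*((4*A₁)^2*(2*Cg)*CD)*((1+r)^(2*m-4)*(1+r)^(m-1)*(1+r)^(m-1)) := by ring
        _ = 2*((4*A₁)^2*(2*Cg)*CD)*(1+r)^(4*m-6) := by
            rw [hrpow, hrpow]
            have e : (2*m-4)+(m-1)+(m-1) = 4*m-6 := by ring
            rw [e]
    have nLG : L*G ≤ (4*A₁)*(2*Cg)*(1+r)^(2*m-3) := by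
      calc L*G ≤ (4*A₁*(1+r)^(m-2))*(2*Cg*(1+r)^(m-1)) :=
            mul_le_mul bL bG hG0 (by positivity)
        _ = (4*A₁)*(2*Cg)*((1+r)^(m-2)*(1+r)^(m-1)) := by ring
        _ = (4*A₁)*(2*Cg)*(1+r)^(2*m-3) := by
            rw [hrpow]
            have e : (m-2)+(m-1) = 2*m-3 := by ring
            rw [e]
    have n3 : L*G*W ≤ (4*A₁)*(2*Cg)*(1+r)^(2*m-3+γ)
        + ((4*A₁)*(2*Cg)*CE)*(1+r)^(4*m-6) := by
      calc L*G*W ≤ ((4*A₁)*(2*Cg)*(1+r)^(2*m-3))*((1+r)^γ + CE*(1+r)^(2*m-3)) :=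
            mul_le_mul nLG bW hW0 (by positivity)
        _ = (4*A₁)*(2*Cg)*((1+r)^(2*m-3)*(1+r)^γ)
            + ((4*A₁)*(2*Cg)*CE)*((1+r)^(2*m-3)*(1+r)^(2*m-3)) := by ring
        _ = (4*A₁)*(2*Cg)*(1+r)^(2*m-3+γ) + ((4*A₁)*(2*Cg)*CE)*(1+r)^(4*m-6) := by
            rw [hrpow, hrpow]
            have e1 : (2*m-3)+γ = 2*m-3+γ := by ring
            have e2 : (2*m-3)+(2*m-3) = 4*m-6 := by ring
            rw [e1, e2]
    have n4 : (L*Dm)^2 ≤ ((4*A₁)*CD)^2*(1+r)^(4*m-6) := by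
      have b := pow_le_pow_left₀ (mul_nonneg hL0 hDm0) bLD 2
      calc (L*Dm)^2 ≤ ((4*A₁*CD)*(1+r)^(2*m-3))^2 := b
        _ = ((4*A₁)*CD)^2*((1+r)^(2*m-3))^(2:ℕ) := by ring
        _ = ((4*A₁)*CD)^2*(1+r)^(4*m-6) := by rw [hpow2']
    -- assemble
    have t2 : h^2*Treal*(2*L^2*G*Dm)
        ≤ h^2*Treal*(2*((4*A₁)^2*(2*Cg)*CD)*(1+r)^(4*m-6)) :=
      mul_le_mul_of_nonneg_left n2 (by positivity)
    have t3 : h*(L*G*W) ≤ h*((4*A₁)*(2*Cg)*(1+r)^(2*m-3+γ)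
        + ((4*A₁)*(2*Cg)*CE)*(1+r)^(4*m-6)) :=
      mul_le_mul_of_nonneg_left n3 hh.le
    have s2 : 2*(h^2*Treal*(2*L^2*G*Dm) + h*L*G*W) + (L*Dm)^2
        ≤ (2*(h^2*Treal*(2*(4*A₁)^2*(2*Cg)*CD)) + 2*(h*(4*A₁)*(2*Cg)*CE)
            + ((4*A₁)*CD)^2)*(1+r)^(4*m-6)
          + (2*(h*(4*A₁)*(2*Cg)))*(1+r)^(2*m-3+γ) := by
      linarith [t2, t3, n4]
    have s3 := mul_le_mul_of_nonneg_left s2 (show (0:ℝ) ≤ h^2/8 by positivity)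
    have s1 : (3/2)*M₃*Dm^3 ≤ (3/2)*((4*A₁)*CD^3*(1+r)^(4*m-6)) := by linarith [n1]
    have key0 : (3/2)*((4*A₁)*CD^3*(1+r)^(4*m-6))
        + (h^2/8)*((2*(h^2*Treal*(2*(4*A₁)^2*(2*Cg)*CD)) + 2*(h*(4*A₁)*(2*Cg)*CE)
            + ((4*A₁)*CD)^2)*(1+r)^(4*m-6) + (2*(h*(4*A₁)*(2*Cg)))*(1+r)^(2*m-3+γ))
        = KA*(1+r)^(4*m-6) + KC*(1+r)^(2*m-3+γ) := by
      rw [hKAdef, hKCdef]; ring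
    have e46 : (1+r)^(4*m-6) = (1+r)^(m-2)*(1+r)^(3*m-4) := by
      rw [hrpow]
      have e : (m-2)+(3*m-4) = 4*m-6 := by ring
      rw [e]
    have e23 : (1+r)^(2*m-3+γ) = (1+r)^(γ-m+1)*(1+r)^(3*m-4) := by
      rw [hrpow]
      have e : (γ-m+1)+(3*m-4) = 2*m-3+γ := by ring
      rw [e]
    have final : KA*(1+r)^(4*m-6) + KC*(1+r)^(2*m-3+γ) ≤ ε*(1+r)^(3*m-4) := by
      rw [e46, e23]
      have hmul := mul_le_mul_of_nonneg_right hc4.le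
        (Real.rpow_nonneg hu0.le (3*m-4))
      linarith [hmul]
    have hρeq : ε*(1+r)^(3*m-4) = (h^4*A₂/8)*ρ := by rw [hεdef, hρdef]; ring
    calc (3/2)*M₃*Dm^3 + (h^2/8)*(2*(h^2*Treal*(2*L^2*G*Dm) + h*L*G*W) + (L*Dm)^2)
        ≤ (3/2)*((4*A₁)*CD^3*(1+r)^(4*m-6))
          + (h^2/8)*((2*(h^2*Treal*(2*(4*A₁)^2*(2*Cg)*CD)) + 2*(h*(4*A₁)*(2*Cg)*CE)
              + ((4*A₁)*CD)^2)*(1+r)^(4*m-6)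
            + (2*(h*(4*A₁)*(2*Cg)))*(1+r)^(2*m-3+γ)) := by linarith [s1, s3]
      _ = KA*(1+r)^(4*m-6) + KC*(1+r)^(2*m-3+γ) := key0
      _ ≤ ε*(1+r)^(3*m-4) := final
      _ = (h^4*A₂/8)*ρ := hρeq
  -- bound T * Dm ≤ r/2
  have hTDm : Treal*Dm ≤ r/2 := by
    have h1 := mul_le_mul_of_nonneg_right hc3 (Real.rpow_nonneg hu0.le (m-1))
    have h2 : (1+r)^(2-m)*(1+r)^(m-1) = 1+r := by
      rw [hrpow]
      have e : (2-m)+(m-1) = 1 := by ring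
      rw [e, Real.rpow_one]
    have h3 : 4*Treal*h*C1*(1+r)^(m-1) ≤ 1+r := le_of_le_of_eq h1 h2
    have h4 : Treal*Dm ≤ Treal*(CD*(1+r)^(m-1)) := mul_le_mul_of_nonneg_left bDm hT0
    have h5 : Treal*(CD*(1+r)^(m-1)) = Treal*h*C1*(1+r)^(m-1) := by rw [hCDdef]; ring
    have h6 : (1:ℝ)+r ≤ 2*r := by linarith
    linarith
  -- the leapfrog iterates
  set X : ℕ → (EuclideanSpace ℝ (Fin d)) × (EuclideanSpace ℝ (Fin d)) :=
    fun k => (leapfrog U h)^[k] (q₀, p₀) with hXdef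
  have hXsucc : ∀ k, X (k+1) = leapfrog U h (X k) := fun k =>
    Function.iterate_succ_apply' _ _ _
  have hstep : ∀ k, X (k+1) =
      ((X k).1 + h • ((X k).2 - (h/2) • gradient U (X k).1),
       ((X k).2 - (h/2) • gradient U (X k).1)
         - (h/2) • gradient U ((X k).1 + h • ((X k).2 - (h/2) • gradient U (X k).1))) := by
    intro k
    rw [hXsucc k]
    rfl
  have hq₀K : q₀ ∈ K := Metric.mem_closedBall_self (by linarith)
  have hGq₀ : ‖gradient U q₀‖ ≤ G := hGK q₀ hq₀K
  -- the big induction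
  have main : ∀ k, k ≤ T →
      ‖(X k).1 - q₀‖ ≤ k*Dm ∧
      ‖(X k).2 - (h/2) • gradient U ((X k).1)‖ ≤ P + ((k:ℝ)+1)*(h*G) ∧
      ‖(X k).2 - (h/2) • gradient U ((X k).1) - p₀
          + (h*((k:ℝ)+1/2)) • gradient U ((X k).1)‖ ≤ k*(h*Treal*L*Dm) ∧
      hamiltonian U (X k) ≤ hamiltonian U (q₀, p₀) := by
    intro k
    induction k with
    | zero =>
      intro _
      have hX0 : X 0 = (q₀, p₀) := rfl
      rw [hX0]
      refine ⟨by simp, ?_, ?_, le_refl _⟩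
      · calc ‖p₀ - (h/2) • gradient U q₀‖ ≤ ‖p₀‖ + ‖(h/2) • gradient U q₀‖ :=
            norm_sub_le _ _
          _ ≤ P + ((0:ℝ)+1)*(h*G) := by
            rw [norm_smul, Real.norm_eq_abs, abs_of_pos (by linarith : (0:ℝ) < h/2)]
            have h1 : (h/2)*‖gradient U q₀‖ ≤ (h/2)*G :=
              mul_le_mul_of_nonneg_left hGq₀ (by linarith)
            have h2 : (h/2)*G ≤ h*G :=
              mul_le_mul_of_nonneg_right (by linarith) hG0
            have hp₀' : ‖p₀‖ ≤ P := hp₀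
            linarith
          _ = P + (((0:ℕ):ℝ)+1)*(h*G) := by norm_num
      · have e0 : p₀ - (h/2) • gradient U q₀ - p₀
            + (h*(((0:ℕ):ℝ)+1/2)) • gradient U q₀ = 0 := by
          push_cast
          module
        rw [e0]
        simp
    | succ k ih =>
      intro hk1
      have hkT : k ≤ T := Nat.le_of_succ_le hk1
      obtain ⟨hq, hph, he, hHam⟩ := ih hkT
      have hkR : (k:ℝ) ≤ Treal := by rw [hTrdef]; exact_mod_cast hkT
      have hk1R : (k:ℝ)+1 ≤ Treal := by
        rw [hTrdef]; push_cast; exact_mod_cast hk1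
      -- abbreviations
      set a := (X k).1 with hadef
      set pa := (X k).2 with hpadef
      set pha := pa - (h/2) • gradient U a with hphadef
      set b := a + h • pha with hbdef
      have hX1 : (X (k+1)).1 = b := by rw [hstep k]
      have hX2 : (X (k+1)).2 = pha - (h/2) • gradient U b := by rw [hstep k]
      -- momentum bound
      have hphPm : ‖pha‖ ≤ Pm := by
        rw [hPmdef]
        calc ‖pha‖ ≤ P + ((k:ℝ)+1)*(h*G) := hph
          _ ≤ P + Treal*(h*G) := by
            have := mul_le_mul_of_nonneg_right hk1R (mul_nonneg hh.le hG0)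
            linarith
          _ = P + Treal*h*G := by ring
      have hΔm : h*‖pha‖ ≤ Dm := by
        rw [hDmdef]
        exact mul_le_mul_of_nonneg_left hphPm hh.le
      -- segment stays in the ball
      have hseg : ∀ t ∈ Icc (0:ℝ) 1, a + t • (h • pha) ∈ K := by
        intro t ht
        rw [hKdef, Metric.mem_closedBall, dist_eq_norm]
        have e1 : a + t • (h • pha) - q₀ = (a - q₀) + t • (h • pha) := by abel
        rw [e1]
        calc ‖(a - q₀) + t • (h • pha)‖ ≤ ‖a - q₀‖ + ‖t • (h • pha)‖ := norm_add_le _ _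
          _ ≤ (k:ℝ)*Dm + 1*(h*‖pha‖) := by
            rw [norm_smul, Real.norm_eq_abs, abs_of_nonneg ht.1, norm_smul,
              Real.norm_eq_abs, abs_of_pos hh]
            have h1 : t*(h*‖pha‖) ≤ 1*(h*‖pha‖) :=
              mul_le_mul_of_nonneg_right ht.2 (by positivity)
            linarith [hq]
          _ ≤ (k:ℝ)*Dm + Dm := by linarith [hΔm]
          _ ≤ Treal*Dm := by
            have := mul_le_mul_of_nonneg_right hk1R hDm0
            linarith
          _ ≤ r/2 := hTDm
      have haK : a ∈ K := by
        have := hseg 0 (left_mem_Icc.2 zero_le_one)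
        simpa using this
      have hbK : b ∈ K := by
        have := hseg 1 (right_mem_Icc.2 zero_le_one)
        rw [hbdef]
        simpa using this
      -- decomposition of pha
      set w := pha + (h*((k:ℝ)+1/2)) • gradient U a with hwdef
      have hdecomp : pha = w - (h*((k:ℝ)+1/2)) • gradient U a := by rw [hwdef]; abel
      have hWb : ‖w‖ ≤ W := by
        have e1 : w = p₀ + (pha - p₀ + (h*((k:ℝ)+1/2)) • gradient U a) := by
          rw [hwdef]; abel
        rw [e1, hWdef]
        calc ‖p₀ + (pha - p₀ + (h*((k:ℝ)+1/2)) • gradient U a)‖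
            ≤ ‖p₀‖ + ‖pha - p₀ + (h*((k:ℝ)+1/2)) • gradient U a‖ := norm_add_le _ _
          _ ≤ P + (k:ℝ)*(h*Treal*L*Dm) := by
            have hp₀' : ‖p₀‖ ≤ P := hp₀
            linarith [he]
          _ ≤ P + Em := by
            rw [hEmdef]
            have h1 : (k:ℝ)*(h*Treal*L*Dm) ≤ Treal*(h*Treal*L*Dm) :=
              mul_le_mul_of_nonneg_right hkR (by positivity)
            linarith
      -- apply the one-step energy estimate
      have hdrop := HMCAux.step_energy_core U hU1 hU2 K h ((k:ℝ)+1/2) Treal A₂ ρ L M₃ G W Dm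
        hh (by linarith [show (0:ℝ) ≤ (k:ℝ) from Nat.cast_nonneg k]) (by linarith) hL0 hM₃0 hG0 hρ0 hW0 hDm0 hT0
        a pa pha b w hphadef hbdef hdecomp hseg hΔm hWb hLK
        (fun x hx => hf''lip x hx a haK) (fun x hx => hglipK x hx a haK) hGK hhessK hnum
      have hHam1 : hamiltonian U (X (k+1)) ≤ hamiltonian U (X k) := by
        rw [hamiltonian, hamiltonian, hX1, hX2]
        exact hdrop
      -- new position bound
      have hq' : ‖(X (k+1)).1 - q₀‖ ≤ ((k+1:ℕ):ℝ)*Dm := by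
        rw [hX1, hbdef]
        have e1 : a + h • pha - q₀ = (a - q₀) + h • pha := by abel
        rw [e1]
        calc ‖(a - q₀) + h • pha‖ ≤ ‖a - q₀‖ + ‖h • pha‖ := norm_add_le _ _
          _ ≤ (k:ℝ)*Dm + Dm := by
            rw [norm_smul, Real.norm_eq_abs, abs_of_pos hh]
            linarith [hq, hΔm]
          _ = ((k+1:ℕ):ℝ)*Dm := by push_cast; ring
      -- new momentum relation
      have hphnew : (X (k+1)).2 - (h/2) • gradient U ((X (k+1)).1)
          = pha - h • gradient U b := by
        rw [hX1, hX2]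
        module
      have hGb : ‖gradient U b‖ ≤ G := hGK b hbK
      have hph' : ‖(X (k+1)).2 - (h/2) • gradient U ((X (k+1)).1)‖
          ≤ P + (((k+1:ℕ):ℝ)+1)*(h*G) := by
        rw [hphnew]
        calc ‖pha - h • gradient U b‖ ≤ ‖pha‖ + ‖h • gradient U b‖ := norm_sub_le _ _
          _ ≤ (P + ((k:ℝ)+1)*(h*G)) + h*G := by
            rw [norm_smul, Real.norm_eq_abs, abs_of_pos hh]
            have := mul_le_mul_of_nonneg_left hGb hh.le
            linarith [hph]
          _ = P + (((k+1:ℕ):ℝ)+1)*(h*G) := by push_cast; ring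
      -- new e-vector bound
      have hgba : ‖gradient U b - gradient U a‖ ≤ L*Dm := by
        have h1 := hglipK b hbK a haK
        have h2 : ‖b - a‖ ≤ Dm := by
          have e1 : b - a = h • pha := by rw [hbdef]; abel
          rw [e1, norm_smul, Real.norm_eq_abs, abs_of_pos hh]
          exact hΔm
        calc ‖gradient U b - gradient U a‖ ≤ L*‖b - a‖ := h1
          _ ≤ L*Dm := mul_le_mul_of_nonneg_left h2 hL0
      have he' : ‖(X (k+1)).2 - (h/2) • gradient U ((X (k+1)).1) - p₀
          + (h*(((k+1:ℕ):ℝ)+1/2)) • gradient U ((X (k+1)).1)‖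
          ≤ ((k+1:ℕ):ℝ)*(h*Treal*L*Dm) := by
        rw [hphnew, hX1]
        have eid : pha - h • gradient U b - p₀
            + (h*(((k+1:ℕ):ℝ)+1/2)) • gradient U b
            = (pha - p₀ + (h*((k:ℝ)+1/2)) • gradient U a)
              + (h*((k:ℝ)+1/2)) • (gradient U b - gradient U a) := by
          push_cast
          module
        rw [eid]
        calc ‖(pha - p₀ + (h*((k:ℝ)+1/2)) • gradient U a)
              + (h*((k:ℝ)+1/2)) • (gradient U b - gradient U a)‖
            ≤ ‖pha - p₀ + (h*((k:ℝ)+1/2)) • gradient U a‖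
              + ‖(h*((k:ℝ)+1/2)) • (gradient U b - gradient U a)‖ := norm_add_le _ _
          _ ≤ (k:ℝ)*(h*Treal*L*Dm) + (h*Treal)*(L*Dm) := by
            rw [norm_smul, Real.norm_eq_abs, abs_of_pos (by positivity : (0:ℝ) < h*((k:ℝ)+1/2))]
            have h1 : h*((k:ℝ)+1/2) ≤ h*Treal := by
              apply mul_le_mul_of_nonneg_left _ hh.le
              linarith
            have h2 : (h*((k:ℝ)+1/2))*‖gradient U b - gradient U a‖ ≤ (h*Treal)*(L*Dm) := by
              apply mul_le_mul h1 hgba (norm_nonneg _) (by positivity)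
            linarith [he]
          _ = ((k+1:ℕ):ℝ)*(h*Treal*L*Dm) := by push_cast; ring
      exact ⟨hq', hph', he', hHam1.trans hHam⟩
  exact (main T le_rfl).2.2.2
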